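/- arXiv:1905.13309 — 5 statements merged into one kernel-verified Lean document; each statement's English description precedes it below -/
import Mathlib

section
/- Let g : ℝ² → ℝ, let a, b be natural numbers such that (x,y) ↦ (x+iy)^a (x−iy)^b g(x,y) is integrable, let ψ ∈ ℝ, and let g' be the image rotated by angle ψ, i.e. g'(p) = g(R_{−ψ} p) where R_ψ is the rotation of ℝ² by angle ψ (so g'(x,y) = g(x cos ψ + y sin ψ, −x sin ψ + y cos ψ)). Then C_{ab}(g') = exp(i(a−b)ψ) · C_{ab}(g). -/
open MeasureTheory

private lemma auxre (z : ℂ) : ((z.re : ℂ) + Complex.I * z.im) = z := by simp [Complex.ext_iff]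
private lemma auxim (z : ℂ) : ((z.re : ℂ) - Complex.I * z.im) = starRingEnd ℂ z := by
  simp [Complex.ext_iff]

private lemma keyC (h : ℝ × ℝ → ℝ) (a b : ℕ) :
    (∫ p : ℝ × ℝ, ((p.1 : ℂ) + Complex.I * p.2) ^ a * ((p.1 : ℂ) - Complex.I * p.2) ^ b * (h p : ℂ))
      = ∫ z : ℂ, z ^ a * (starRingEnd ℂ z) ^ b * (h (z.re, z.im) : ℂ) := by
  rw [← Complex.volume_preserving_equiv_real_prod.integral_comp
    Complex.measurableEquivRealProd.measurableEmbedding]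
  congr 1
  ext z
  have : Complex.measurableEquivRealProd z = (z.re, z.im) := rfl
  rw [this]
  simp only [auxre, auxim]

/-- Under rotation by angle `ψ`, the complex moment `C_{ab}` picks up the phase
`exp (i (a - b) ψ)`. -/
theorem complexMoment_rotation (g : ℝ × ℝ → ℝ) (a b : ℕ)
    (hab : Integrable (fun p : ℝ × ℝ =>
      ((p.1 : ℂ) + Complex.I * p.2) ^ a * ((p.1 : ℂ) - Complex.I * p.2) ^ b * (g p : ℂ)))
    (ψ : ℝ) (g' : ℝ × ℝ → ℝ)
    (hg' : ∀ p : ℝ × ℝ, g' p =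
      g (p.1 * Real.cos ψ + p.2 * Real.sin ψ, -p.1 * Real.sin ψ + p.2 * Real.cos ψ)) :
    (∫ p : ℝ × ℝ,
        ((p.1 : ℂ) + Complex.I * p.2) ^ a * ((p.1 : ℂ) - Complex.I * p.2) ^ b * (g' p : ℂ))
      = Complex.exp (Complex.I * ((a : ℂ) - (b : ℂ)) * (ψ : ℂ)) *
        ∫ p : ℝ × ℝ,
          ((p.1 : ℂ) + Complex.I * p.2) ^ a * ((p.1 : ℂ) - Complex.I * p.2) ^ b * (g p : ℂ) := by
  rw [keyC g' a b, keyC g a b]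
  have hg'z : ∀ z : ℂ, (g' (z.re, z.im) : ℂ)
      = g ((Complex.exp (-ψ * Complex.I) * z).re, (Complex.exp (-ψ * Complex.I) * z).im) := by
    intro z
    rw [hg' (z.re, z.im)]
    have hre : (Complex.exp (-((ψ:ℂ) * Complex.I))).re = Real.cos ψ := by
      rw [← neg_mul, show -(ψ:ℂ) = ((-ψ:ℝ):ℂ) from (Complex.ofReal_neg ψ).symm,
        Complex.exp_ofReal_mul_I_re, Real.cos_neg]
    have him : (Complex.exp (-((ψ:ℂ) * Complex.I))).im = -Real.sin ψ := by
      rw [← neg_mul, show -(ψ:ℂ) = ((-ψ:ℝ):ℂ) from (Complex.ofReal_neg ψ).symm,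
        Complex.exp_ofReal_mul_I_im, Real.sin_neg]
    congr 2 <;>
    · simp only [neg_mul, Complex.mul_re, Complex.mul_im, hre, him]
      ring
  simp only [hg'z]
  have hmp := (rotation (Circle.exp ψ)).measurePreserving
  rw [← hmp.integral_comp (rotation (Circle.exp ψ)).toHomeomorph.measurableEmbedding]
  have hrot : ∀ w : ℂ, rotation (Circle.exp ψ) w = Complex.exp (ψ * Complex.I) * w := by
    intro w; rw [rotation_apply, Circle.coe_exp]
  have heq : ∀ w : ℂ,
      (rotation (Circle.exp ψ) w) ^ a * (starRingEnd ℂ (rotation (Circle.exp ψ) w)) ^ b *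
        (g ((Complex.exp (-ψ * Complex.I) * rotation (Circle.exp ψ) w).re,
            (Complex.exp (-ψ * Complex.I) * rotation (Circle.exp ψ) w).im) : ℂ)
      = Complex.exp (Complex.I * ((a : ℂ) - (b : ℂ)) * (ψ : ℂ)) *
          (w ^ a * (starRingEnd ℂ w) ^ b * (g (w.re, w.im) : ℂ)) := by
    intro w
    rw [hrot w]
    have h1 : Complex.exp (-ψ * Complex.I) * (Complex.exp (ψ * Complex.I) * w) = w := by
      rw [← mul_assoc, ← Complex.exp_add]; ring_nf; simp
    rw [h1]
    have h2 : starRingEnd ℂ (Complex.exp ((ψ:ℂ) * Complex.I)) = Complex.exp (-((ψ:ℂ) * Complex.I)) := by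
      rw [← Complex.exp_conj]; simp
    have h3 : Complex.exp ((ψ:ℂ) * Complex.I) ^ a * Complex.exp (-((ψ:ℂ) * Complex.I)) ^ b
        = Complex.exp (Complex.I * ((a:ℂ) - (b:ℂ)) * (ψ:ℂ)) := by
      rw [← Complex.exp_nat_mul, ← Complex.exp_nat_mul, ← Complex.exp_add]; ring_nf
    rw [mul_pow, map_mul, h2, mul_pow]
    linear_combination (w ^ a * (starRingEnd ℂ w) ^ b * (g (w.re, w.im) : ℂ)) * h3
  simp only [heq]
  rw [integral_const_mul]
end

section
/- Let g : ℝ² → ℝ, let k ≥ 1, and for each index j = 1,…,k let a_j, b_j, c_j be natural numbers with ∑_{j=1}^k c_j·((a_j : ℤ) − (b_j : ℤ)) = 0, such that each (x,y) ↦ (x+iy)^{a_j} (x−iy)^{b_j} g(x,y) is integrable. Let ψ ∈ ℝ and g'(p) = g(R_{−ψ} p). Then the phase-cancelled product of complex moments is rotation invariant: ∏_{j=1}^k C_{a_j b_j}(g')^{c_j} = ∏_{j=1}^k C_{a_j b_j}(g)^{c_j}. -/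
open MeasureTheory Complex

private noncomputable def rotEquiv (ψ : ℝ) : (ℝ × ℝ) ≃ᵐ (ℝ × ℝ) :=
  (Complex.measurableEquivRealProd.symm).trans
    (((rotation (Circle.exp ψ)).toHomeomorph.toMeasurableEquiv).trans
      Complex.measurableEquivRealProd)

private lemma rotEquiv_apply (ψ : ℝ) (q : ℝ × ℝ) :
    rotEquiv ψ q =
      (q.1 * Real.cos ψ - q.2 * Real.sin ψ, q.1 * Real.sin ψ + q.2 * Real.cos ψ) := by
  show (Complex.measurableEquivRealProd
    ((rotation (Circle.exp ψ)) (Complex.measurableEquivRealProd.symm q))) = _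
  simp only [Complex.measurableEquivRealProd_symm_apply, Complex.measurableEquivRealProd_apply,
    rotation_apply, Circle.coe_exp, Complex.exp_mul_I]
  rw [Prod.ext_iff]
  constructor <;>
    simp [Complex.mul_re, Complex.mul_im, Complex.cos_ofReal_re, Complex.sin_ofReal_re,
      Complex.cos_ofReal_im, Complex.sin_ofReal_im] <;> ring

private lemma rot_measurePreserving (ψ : ℝ) :
    MeasurePreserving (rotEquiv ψ) volume volume := by
  have h1 : MeasurePreserving (Complex.measurableEquivRealProd.symm) volume volume :=
    Complex.volume_preserving_equiv_real_prod.symm _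
  have h2 : MeasurePreserving (⇑(rotation (Circle.exp ψ))) volume volume :=
    (rotation (Circle.exp ψ)).measurePreserving
  have h3 : MeasurePreserving (Complex.measurableEquivRealProd) volume volume :=
    Complex.volume_preserving_equiv_real_prod
  exact (h3.comp h2).comp h1

private lemma rot_integral (ψ : ℝ) (f : ℝ × ℝ → ℂ) :
    (∫ q : ℝ × ℝ, f (q.1 * Real.cos ψ - q.2 * Real.sin ψ,
      q.1 * Real.sin ψ + q.2 * Real.cos ψ)) = ∫ p : ℝ × ℝ, f p := by
  have := (rot_measurePreserving ψ).integral_comp' (g := f)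
  rw [← this]
  exact integral_congr_ae (Filter.Eventually.of_forall fun q => by simp only [rotEquiv_apply])

private lemma moment_rot (g g' : ℝ × ℝ → ℝ) (ψ : ℝ)
    (hg' : ∀ p : ℝ × ℝ, g' p =
      g (p.1 * Real.cos ψ + p.2 * Real.sin ψ, -p.1 * Real.sin ψ + p.2 * Real.cos ψ))
    (a b : ℕ) :
    (∫ p : ℝ × ℝ, ((p.1 : ℂ) + Complex.I * p.2) ^ a * ((p.1 : ℂ) - Complex.I * p.2) ^ b *
        (g' p : ℂ))
      = Complex.exp (ψ * Complex.I) ^ a * (Complex.exp (ψ * Complex.I))⁻¹ ^ b *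
        ∫ p : ℝ × ℝ, ((p.1 : ℂ) + Complex.I * p.2) ^ a * ((p.1 : ℂ) - Complex.I * p.2) ^ b *
          (g p : ℂ) := by
  rw [← rot_integral ψ (fun p : ℝ × ℝ =>
    ((p.1 : ℂ) + Complex.I * p.2) ^ a * ((p.1 : ℂ) - Complex.I * p.2) ^ b * (g' p : ℂ)),
    ← integral_const_mul]
  refine integral_congr_ae (Filter.Eventually.of_forall fun q => ?_)
  simp only
  have hgq : g' (q.1 * Real.cos ψ - q.2 * Real.sin ψ, q.1 * Real.sin ψ + q.2 * Real.cos ψ)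
      = g q := by
    rw [hg']
    congr 1
    rw [Prod.ext_iff]
    constructor
    · simp only
      linear_combination q.1 * Real.sin_sq_add_cos_sq ψ
    · simp only
      linear_combination q.2 * Real.sin_sq_add_cos_sq ψ
  rw [hgq]
  have hplus : ((q.1 * Real.cos ψ - q.2 * Real.sin ψ : ℝ) : ℂ)
      + Complex.I * ((q.1 * Real.sin ψ + q.2 * Real.cos ψ : ℝ) : ℂ)
      = Complex.exp (ψ * Complex.I) * ((q.1 : ℂ) + Complex.I * q.2) := by
    rw [Complex.exp_mul_I]
    push_cast
    simp only [← Complex.ofReal_cos, ← Complex.ofReal_sin]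
    linear_combination (-(q.2 : ℂ) * (Real.sin ψ : ℂ)) * Complex.I_sq
  have hminus : ((q.1 * Real.cos ψ - q.2 * Real.sin ψ : ℝ) : ℂ)
      - Complex.I * ((q.1 * Real.sin ψ + q.2 * Real.cos ψ : ℝ) : ℂ)
      = (Complex.exp (ψ * Complex.I))⁻¹ * ((q.1 : ℂ) - Complex.I * q.2) := by
    rw [← Complex.exp_neg]
    rw [show -(↑ψ * Complex.I) = (↑(-ψ) : ℂ) * Complex.I by push_cast; ring, Complex.exp_mul_I,
      ← Complex.ofReal_cos, ← Complex.ofReal_sin]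
    push_cast [Real.cos_neg, Real.sin_neg]
    simp only [← Complex.ofReal_cos, ← Complex.ofReal_sin]
    linear_combination (-(q.2 : ℂ) * (Real.sin ψ : ℂ)) * Complex.I_sq
  rw [hplus, hminus, mul_pow, mul_pow]
  ring

/-- A phase-cancelled product of complex moments is invariant under rotation. -/
theorem phaseCancelledProduct_rotation_invariant (g : ℝ × ℝ → ℝ)
    (k : ℕ) (hk : 1 ≤ k) (a b c : Fin k → ℕ)
    (hsum : ∑ j : Fin k, (c j : ℤ) * ((a j : ℤ) - (b j : ℤ)) = 0)
    (hint : ∀ j : Fin k, Integrable (fun p : ℝ × ℝ =>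
      ((p.1 : ℂ) + Complex.I * p.2) ^ (a j) * ((p.1 : ℂ) - Complex.I * p.2) ^ (b j) * (g p : ℂ)))
    (ψ : ℝ) (g' : ℝ × ℝ → ℝ)
    (hg' : ∀ p : ℝ × ℝ, g' p =
      g (p.1 * Real.cos ψ + p.2 * Real.sin ψ, -p.1 * Real.sin ψ + p.2 * Real.cos ψ)) :
    (∏ j : Fin k, (∫ p : ℝ × ℝ,
        ((p.1 : ℂ) + Complex.I * p.2) ^ (a j) * ((p.1 : ℂ) - Complex.I * p.2) ^ (b j) *
          (g' p : ℂ)) ^ (c j))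
      = ∏ j : Fin k, (∫ p : ℝ × ℝ,
          ((p.1 : ℂ) + Complex.I * p.2) ^ (a j) * ((p.1 : ℂ) - Complex.I * p.2) ^ (b j) *
            (g p : ℂ)) ^ (c j) := by
  set w : ℂ := Complex.exp (ψ * Complex.I) with hw
  have hw0 : w ≠ 0 := Complex.exp_ne_zero _
  have hrw : ∀ j : Fin k, (∫ p : ℝ × ℝ,
      ((p.1 : ℂ) + Complex.I * p.2) ^ (a j) * ((p.1 : ℂ) - Complex.I * p.2) ^ (b j) *
        (g' p : ℂ))
      = w ^ (a j) * w⁻¹ ^ (b j) * ∫ p : ℝ × ℝ,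
        ((p.1 : ℂ) + Complex.I * p.2) ^ (a j) * ((p.1 : ℂ) - Complex.I * p.2) ^ (b j) *
          (g p : ℂ) := fun j => moment_rot g g' ψ hg' (a j) (b j)
  simp only [hrw, mul_pow, Finset.prod_mul_distrib, ← pow_mul]
  have hNsum : ∑ j : Fin k, a j * c j = ∑ j : Fin k, b j * c j := by
    have h1 : ∑ j : Fin k, (c j : ℤ) * (a j : ℤ) = ∑ j : Fin k, (c j : ℤ) * (b j : ℤ) := by
      rw [← sub_eq_zero, ← Finset.sum_sub_distrib]
      simpa [mul_sub] using hsum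
    have h2 : (↑(∑ j : Fin k, a j * c j) : ℤ) = (↑(∑ j : Fin k, b j * c j) : ℤ) := by
      push_cast
      simpa [mul_comm] using h1
    exact_mod_cast h2
  rw [Finset.prod_pow_eq_pow_sum, Finset.prod_pow_eq_pow_sum, hNsum, inv_pow,
    mul_inv_cancel₀ (pow_ne_zero _ hw0), one_mul]
end

section
/- Let g : ℝ² → ℝ be nonnegative and integrable with ∫_{ℝ²} g > 0 and with integrable first moments, let k ≥ 1, and for j = 1,…,k let a_j, b_j, c_j be natural numbers with ∑_{j=1}^k c_j·((a_j : ℤ) − (b_j : ℤ)) = 0, such that each centered integrand ((x−x_c)+i(y−y_c))^{a_j}((x−x_c)−i(y−y_c))^{b_j} g(x,y) is integrable (for both images below). Let t(g) be obtained from g by a translation by (κ,β), a rotation by angle ψ about the centroid, and a uniform scaling by α > 0, i.e. t(g)(p) = g(R_{−ψ}((p − τ)/α)) with τ = (κ,β). Then with w_j = c_j(a_j+b_j+2)/2, ∏_{j=1}^k [ C^c_{a_j b_j}(t(g))^{c_j} / (∫_{ℝ²} t(g))^{w_j} ] = ∏_{j=1}^k [ C^c_{a_j b_j}(g)^{c_j}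 / (∫_{ℝ²} g)^{w_j} ], where each denominator is the real power (rpow) of the positive real total mass, coerced to ℂ; i.e. the normalized central complex moment product is invariant under translation, rotation and scaling. -/
open MeasureTheory Complex

lemma integral_comp_TRS {F : Type*} [NormedAddCommGroup F] [NormedSpace ℝ F]
    (ψ κ β α : ℝ) (hα : 0 < α) (f : ℝ × ℝ → F) :
    (∫ q : ℝ × ℝ, f (α * (q.1 * Real.cos ψ - q.2 * Real.sin ψ) + κ,
        α * (q.1 * Real.sin ψ + q.2 * Real.cos ψ) + β))
      = (α ^ 2)⁻¹ • ∫ p : ℝ × ℝ, f p := by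
  have hmp := Complex.volume_preserving_equiv_real_prod
  have key : ∀ z : ℂ,
      α * (z.re * Real.cos ψ - z.im * Real.sin ψ) + κ
        = ((rotation (Circle.exp ψ)) (α • z) + (κ + β * I)).re ∧
      α * (z.re * Real.sin ψ + z.im * Real.cos ψ) + β
        = ((rotation (Circle.exp ψ)) (α • z) + (κ + β * I)).im := by
    intro z
    constructor <;>
    · simp [rotation_apply, Complex.measurableEquivRealProd_apply, Complex.add_re,
        Complex.add_im, Complex.mul_re, Complex.mul_im, Complex.smul_re, Complex.smul_im,
        Circle.coe_exp, Complex.exp_ofReal_mul_I_re, Complex.exp_ofReal_mul_I_im]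
      ring
  calc
    (∫ q : ℝ × ℝ, f (α * (q.1 * Real.cos ψ - q.2 * Real.sin ψ) + κ,
        α * (q.1 * Real.sin ψ + q.2 * Real.cos ψ) + β))
      = ∫ z : ℂ, f (Complex.measurableEquivRealProd
            ((rotation (Circle.exp ψ)) (α • z) + (κ + β * I))) := by
        rw [← hmp.integral_comp Complex.measurableEquivRealProd.measurableEmbedding
            (fun q : ℝ × ℝ => f (α * (q.1 * Real.cos ψ - q.2 * Real.sin ψ) + κ,
              α * (q.1 * Real.sin ψ + q.2 * Real.cos ψ) + β))]
        simp only [Complex.measurableEquivRealProd_apply]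
        congr 1
        ext z
        rw [(key z).1, (key z).2]
    _ = (α ^ 2)⁻¹ • ∫ z : ℂ, f (Complex.measurableEquivRealProd
          ((rotation (Circle.exp ψ)) z + (κ + β * I))) := by
        have := MeasureTheory.Measure.integral_comp_smul (volume : Measure ℂ)
          (fun z : ℂ => f (Complex.measurableEquivRealProd
            ((rotation (Circle.exp ψ)) z + (κ + β * I)))) α
        simp only [Complex.finrank_real_complex] at this
        rw [this, _root_.abs_of_nonneg (by positivity)]
    _ = (α ^ 2)⁻¹ • ∫ z : ℂ, f (Complex.measurableEquivRealProd (z + (κ + β * I))) := by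
        congr 1
        exact (LinearIsometryEquiv.measurePreserving (rotation (Circle.exp ψ))).integral_comp
          (rotation (Circle.exp ψ)).toHomeomorph.measurableEmbedding
          (fun u : ℂ => f (Complex.measurableEquivRealProd (u + (κ + β * I))))
    _ = (α ^ 2)⁻¹ • ∫ z : ℂ, f (Complex.measurableEquivRealProd z) := by
        congr 1
        exact integral_add_right_eq_self (fun u : ℂ => f (Complex.measurableEquivRealProd u)) (κ + β * I)
    _ = (α ^ 2)⁻¹ • ∫ p : ℝ × ℝ, f p := by
        congr 1
        exact hmp.integral_comp Complex.measurableEquivRealProd.measurableEmbedding f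

/-- The x-coordinate of the centroid of an image. -/
noncomputable def xc (g : ℝ × ℝ → ℝ) : ℝ :=
  (∫ p : ℝ × ℝ, p.1 * g p) / (∫ p : ℝ × ℝ, g p)

/-- The y-coordinate of the centroid of an image. -/
noncomputable def yc (g : ℝ × ℝ → ℝ) : ℝ :=
  (∫ p : ℝ × ℝ, p.2 * g p) / (∫ p : ℝ × ℝ, g p)

/-- The central complex moment of order `(a, b)`. -/
noncomputable def centralComplexMoment (g : ℝ × ℝ → ℝ) (a b : ℕ) : ℂ :=
  ∫ p : ℝ × ℝ,
    (((p.1 - xc g : ℝ) : ℂ) + Complex.I * ((p.2 - yc g : ℝ) : ℂ)) ^ a *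
      (((p.1 - xc g : ℝ) : ℂ) - Complex.I * ((p.2 - yc g : ℝ) : ℂ)) ^ b * (g p : ℂ)

/-- The normalized phase-cancelled product of central complex moments is invariant
under a combined translation, rotation about the centroid and uniform scaling. -/
theorem normalizedCentralComplexMomentProduct_TRS_invariant (g : ℝ × ℝ → ℝ)
    (hnn : ∀ p, 0 ≤ g p) (hg : Integrable g) (hpos : 0 < ∫ p : ℝ × ℝ, g p)
    (hx : Integrable (fun p : ℝ × ℝ => p.1 * g p))
    (hy : Integrable (fun p : ℝ × ℝ => p.2 * g p))
    (k : ℕ) (hk : 1 ≤ k) (a b c : Fin k → ℕ)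
    (hsum : ∑ j : Fin k, (c j : ℤ) * ((a j : ℤ) - (b j : ℤ)) = 0)
    (κ β ψ α : ℝ) (hα : 0 < α) (tg : ℝ × ℝ → ℝ)
    (htg : ∀ p : ℝ × ℝ, tg p =
      g (((p.1 - κ) / α) * Real.cos ψ + ((p.2 - β) / α) * Real.sin ψ,
        -(((p.1 - κ) / α)) * Real.sin ψ + ((p.2 - β) / α) * Real.cos ψ))
    (hintg : ∀ j : Fin k, Integrable (fun p : ℝ × ℝ =>
      (((p.1 - xc g : ℝ) : ℂ) + Complex.I * ((p.2 - yc g : ℝ) : ℂ)) ^ (a j) *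
        (((p.1 - xc g : ℝ) : ℂ) - Complex.I * ((p.2 - yc g : ℝ) : ℂ)) ^ (b j) * (g p : ℂ)))
    (hinttg : ∀ j : Fin k, Integrable (fun p : ℝ × ℝ =>
      (((p.1 - xc tg : ℝ) : ℂ) + Complex.I * ((p.2 - yc tg : ℝ) : ℂ)) ^ (a j) *
        (((p.1 - xc tg : ℝ) : ℂ) - Complex.I * ((p.2 - yc tg : ℝ) : ℂ)) ^ (b j) * (tg p : ℂ))) :
    (∏ j : Fin k, centralComplexMoment tg (a j) (b j) ^ (c j) /
        ((((∫ p : ℝ × ℝ, tg p) ^ ((c j : ℝ) * ((a j : ℝ) + b j + 2) / 2) : ℝ)) : ℂ))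
      = ∏ j : Fin k, centralComplexMoment g (a j) (b j) ^ (c j) /
          ((((∫ p : ℝ × ℝ, g p) ^ ((c j : ℝ) * ((a j : ℝ) + b j + 2) / 2) : ℝ)) : ℂ) := by
  have h1 : Real.cos ψ ^ 2 + Real.sin ψ ^ 2 = 1 := Real.cos_sq_add_sin_sq ψ
  have hαne : α ≠ 0 := hα.ne'
  have hMne : (∫ p : ℝ × ℝ, g p) ≠ 0 := hpos.ne'
  -- the forward transformation composed with tg gives back g
  have hcomp : ∀ q : ℝ × ℝ,
      tg (α * (q.1 * Real.cos ψ - q.2 * Real.sin ψ) + κ,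
          α * (q.1 * Real.sin ψ + q.2 * Real.cos ψ) + β) = g q := by
    intro q
    rw [htg]
    congr 1
    rw [Prod.ext_iff]
    constructor
    · field_simp
      linear_combination α * q.1 * h1
    · field_simp
      linear_combination α * q.2 * h1
  -- total mass
  have hMt : (∫ p : ℝ × ℝ, tg p) = α ^ 2 * ∫ p : ℝ × ℝ, g p := by
    have h := integral_comp_TRS ψ κ β α hα tg
    simp only [hcomp] at h
    rw [h, smul_eq_mul, ← mul_assoc, mul_inv_cancel₀ (by positivity), one_mul]
  -- first moments
  have hxt : (∫ p : ℝ × ℝ, p.1 * tg p)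
      = α ^ 2 * (α * Real.cos ψ * (∫ p : ℝ × ℝ, p.1 * g p)
          - α * Real.sin ψ * (∫ p : ℝ × ℝ, p.2 * g p) + κ * ∫ p : ℝ × ℝ, g p) := by
    have h := integral_comp_TRS ψ κ β α hα (fun p : ℝ × ℝ => p.1 * tg p)
    simp only [hcomp] at h
    have e : (fun q : ℝ × ℝ => (α * (q.1 * Real.cos ψ - q.2 * Real.sin ψ) + κ) * g q)
        = fun q : ℝ × ℝ => (α * Real.cos ψ) * (q.1 * g q)
            - (α * Real.sin ψ) * (q.2 * g q) + κ * g q := funext fun q => by ring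
    have i1 : Integrable (fun q : ℝ × ℝ => (α * Real.cos ψ) * (q.1 * g q)
        - (α * Real.sin ψ) * (q.2 * g q)) volume := (hx.const_mul _).sub (hy.const_mul _)
    rw [e, integral_add i1 (hg.const_mul _),
      integral_sub (hx.const_mul _) (hy.const_mul _),
      integral_const_mul, integral_const_mul, integral_const_mul] at h
    rw [smul_eq_mul] at h
    field_simp at h
    linear_combination -h
  have hyt : (∫ p : ℝ × ℝ, p.2 * tg p)
      = α ^ 2 * (α * Real.sin ψ * (∫ p : ℝ × ℝ, p.1 * g p)
          + α * Real.cos ψ * (∫ p : ℝ × ℝ, p.2 * g p) + β * ∫ p : ℝ × ℝ, g p) := by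
    have h := integral_comp_TRS ψ κ β α hα (fun p : ℝ × ℝ => p.2 * tg p)
    simp only [hcomp] at h
    have e : (fun q : ℝ × ℝ => (α * (q.1 * Real.sin ψ + q.2 * Real.cos ψ) + β) * g q)
        = fun q : ℝ × ℝ => (α * Real.sin ψ) * (q.1 * g q)
            + ((α * Real.cos ψ) * (q.2 * g q) + β * g q) := funext fun q => by ring
    have i1 : Integrable (fun q : ℝ × ℝ => (α * Real.cos ψ) * (q.2 * g q)
        + β * g q) volume := (hy.const_mul _).add (hg.const_mul _)
    rw [e, integral_add (hx.const_mul _) i1,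
      integral_add (hy.const_mul _) (hg.const_mul _),
      integral_const_mul, integral_const_mul, integral_const_mul] at h
    rw [smul_eq_mul] at h
    field_simp at h
    linear_combination -h
  -- centroid
  have hxct : xc tg = α * (Real.cos ψ * xc g - Real.sin ψ * yc g) + κ := by
    simp only [xc, yc, hxt, hMt]
    field_simp
  have hyct : yc tg = α * (Real.sin ψ * xc g + Real.cos ψ * yc g) + β := by
    simp only [xc, yc, hyt, hMt]
    field_simp
  -- pointwise transformation of the complex kernels
  have hz : ∀ q : ℝ × ℝ,
      ((α * (q.1 * Real.cos ψ - q.2 * Real.sin ψ) + κ - xc tg : ℝ) : ℂ)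
        + Complex.I * ((α * (q.1 * Real.sin ψ + q.2 * Real.cos ψ) + β - yc tg : ℝ) : ℂ)
      = ((α : ℂ) * Complex.exp ((ψ : ℂ) * Complex.I)) *
          (((q.1 - xc g : ℝ) : ℂ) + Complex.I * ((q.2 - yc g : ℝ) : ℂ)) := by
    intro q
    rw [hxct, hyct, Complex.exp_mul_I, ← Complex.ofReal_cos, ← Complex.ofReal_sin]
    push_cast
    linear_combination (-(α : ℂ) * Complex.sin (ψ : ℂ) * ((q.2 : ℂ) - (yc g : ℂ))) * Complex.I_sq
  have hzbar : ∀ q : ℝ × ℝ,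
      ((α * (q.1 * Real.cos ψ - q.2 * Real.sin ψ) + κ - xc tg : ℝ) : ℂ)
        - Complex.I * ((α * (q.1 * Real.sin ψ + q.2 * Real.cos ψ) + β - yc tg : ℝ) : ℂ)
      = ((α : ℂ) * Complex.exp (((-ψ : ℝ) : ℂ) * Complex.I)) *
          (((q.1 - xc g : ℝ) : ℂ) - Complex.I * ((q.2 - yc g : ℝ) : ℂ)) := by
    intro q
    rw [hxct, hyct, Complex.exp_mul_I, ← Complex.ofReal_cos, ← Complex.ofReal_sin,
      Real.cos_neg, Real.sin_neg]
    push_cast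
    linear_combination (-(α : ℂ) * Complex.sin (ψ : ℂ) * ((q.2 : ℂ) - (yc g : ℂ))) * Complex.I_sq
  -- central complex moments
  have hCt : ∀ n m : ℕ, centralComplexMoment tg n m
      = (α ^ 2 : ℂ) * (((α : ℂ) * Complex.exp ((ψ : ℂ) * Complex.I)) ^ n *
          ((α : ℂ) * Complex.exp (((-ψ : ℝ) : ℂ) * Complex.I)) ^ m) *
        centralComplexMoment g n m := by
    intro n m
    have h := integral_comp_TRS ψ κ β α hα (fun p : ℝ × ℝ =>
      (((p.1 - xc tg : ℝ) : ℂ) + Complex.I * ((p.2 - yc tg : ℝ) : ℂ)) ^ n *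
        (((p.1 - xc tg : ℝ) : ℂ) - Complex.I * ((p.2 - yc tg : ℝ) : ℂ)) ^ m * (tg p : ℂ))
    simp only [hcomp] at h
    have h2 : centralComplexMoment tg n m = (α ^ 2 : ℝ) •
        ∫ q : ℝ × ℝ,
          (((α * (q.1 * Real.cos ψ - q.2 * Real.sin ψ) + κ - xc tg : ℝ) : ℂ)
              + Complex.I * ((α * (q.1 * Real.sin ψ + q.2 * Real.cos ψ) + β - yc tg : ℝ) : ℂ)) ^ n *
            (((α * (q.1 * Real.cos ψ - q.2 * Real.sin ψ) + κ - xc tg : ℝ) : ℂ)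
              - Complex.I * ((α * (q.1 * Real.sin ψ + q.2 * Real.cos ψ) + β - yc tg : ℝ) : ℂ)) ^ m *
            (g q : ℂ) := by
      unfold centralComplexMoment
      rw [h, smul_smul, mul_inv_cancel₀ (by positivity), one_smul]
    rw [h2]
    have e3 : (∫ q : ℝ × ℝ,
        (((α * (q.1 * Real.cos ψ - q.2 * Real.sin ψ) + κ - xc tg : ℝ) : ℂ)
            + Complex.I * ((α * (q.1 * Real.sin ψ + q.2 * Real.cos ψ) + β - yc tg : ℝ) : ℂ)) ^ n *
          (((α * (q.1 * Real.cos ψ - q.2 * Real.sin ψ) + κ - xc tg : ℝ) : ℂ)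
            - Complex.I * ((α * (q.1 * Real.sin ψ + q.2 * Real.cos ψ) + β - yc tg : ℝ) : ℂ)) ^ m *
          (g q : ℂ))
        = (((α : ℂ) * Complex.exp ((ψ : ℂ) * Complex.I)) ^ n *
            ((α : ℂ) * Complex.exp (((-ψ : ℝ) : ℂ) * Complex.I)) ^ m) *
          centralComplexMoment g n m := by
      unfold centralComplexMoment
      rw [← integral_const_mul]
      congr 1
      funext q
      rw [hz q, hzbar q]
      simp only [mul_pow]
      ring
    rw [e3, Complex.real_smul]
    push_cast
    ring
  -- per-factor identity
  have hfac : ∀ j : Fin k,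
      centralComplexMoment tg (a j) (b j) ^ c j /
        (((α ^ 2 * (∫ p : ℝ × ℝ, g p)) ^ ((c j : ℝ) * ((a j : ℝ) + b j + 2) / 2) : ℝ) : ℂ)
      = Complex.exp ((((a j : ℂ) - (b j : ℂ)) * (c j : ℂ)) * ((ψ : ℂ) * Complex.I)) *
        (centralComplexMoment g (a j) (b j) ^ c j /
          (((∫ p : ℝ × ℝ, g p) ^ ((c j : ℝ) * ((a j : ℝ) + b j + 2) / 2) : ℝ) : ℂ)) := by
    intro j
    have hden : (α ^ 2 * (∫ p : ℝ × ℝ, g p)) ^ ((c j : ℝ) * ((a j : ℝ) + b j + 2) / 2)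
        = α ^ ((a j + b j + 2) * c j) *
          (∫ p : ℝ × ℝ, g p) ^ ((c j : ℝ) * ((a j : ℝ) + b j + 2) / 2) := by
      rw [Real.mul_rpow (by positivity) hpos.le]
      congr 1
      rw [← Real.rpow_natCast α ((a j + b j + 2) * c j), ← Real.rpow_natCast α 2,
        ← Real.rpow_mul hα.le]
      congr 1
      push_cast
      ring
    have hnum : centralComplexMoment tg (a j) (b j) ^ c j
        = (α : ℂ) ^ ((a j + b j + 2) * c j) *
          (Complex.exp (((a j * c j : ℕ) : ℂ) * ((ψ : ℂ) * Complex.I)) *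
            Complex.exp (((b j * c j : ℕ) : ℂ) * (((-ψ : ℝ) : ℂ) * Complex.I)) *
            centralComplexMoment g (a j) (b j) ^ c j) := by
      rw [hCt (a j) (b j), Complex.exp_nat_mul, Complex.exp_nat_mul]
      ring
    rw [hnum, hden]
    push_cast
    rw [mul_div_mul_left _ _ (pow_ne_zero _ (by exact_mod_cast hαne))]
    rw [← mul_assoc, ← Complex.exp_add, mul_div_assoc]
    congr 2
    push_cast
    ring
  rw [hMt]
  calc
    (∏ j : Fin k, centralComplexMoment tg (a j) (b j) ^ (c j) /
        ((((α ^ 2 * ∫ p : ℝ × ℝ, g p) ^ ((c j : ℝ) * ((a j : ℝ) + b j + 2) / 2) : ℝ)) : ℂ))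
      = ∏ j : Fin k,
          Complex.exp ((((a j : ℂ) - (b j : ℂ)) * (c j : ℂ)) * ((ψ : ℂ) * Complex.I)) *
            (centralComplexMoment g (a j) (b j) ^ c j /
              (((∫ p : ℝ × ℝ, g p) ^ ((c j : ℝ) * ((a j : ℝ) + b j + 2) / 2) : ℝ) : ℂ)) :=
      Finset.prod_congr rfl fun j _ => hfac j
    _ = (∏ j : Fin k,
          Complex.exp ((((a j : ℂ) - (b j : ℂ)) * (c j : ℂ)) * ((ψ : ℂ) * Complex.I))) *
        ∏ j : Fin k, centralComplexMoment g (a j) (b j) ^ c j /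
          (((∫ p : ℝ × ℝ, g p) ^ ((c j : ℝ) * ((a j : ℝ) + b j + 2) / 2) : ℝ) : ℂ) :=
      Finset.prod_mul_distrib
    _ = ∏ j : Fin k, centralComplexMoment g (a j) (b j) ^ c j /
          (((∫ p : ℝ × ℝ, g p) ^ ((c j : ℝ) * ((a j : ℝ) + b j + 2) / 2) : ℝ) : ℂ) := by
      rw [← Complex.exp_sum]
      have h0 : ∑ j : Fin k, (((a j : ℂ) - (b j : ℂ)) * (c j : ℂ)) * ((ψ : ℂ) * Complex.I)
          = 0 := by
        rw [← Finset.sum_mul]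
        have h2 := congrArg (fun z : ℤ => (z : ℂ)) hsum
        push_cast at h2
        have h3 : ∑ j : Fin k, ((a j : ℂ) - (b j : ℂ)) * (c j : ℂ)
            = ∑ j : Fin k, (c j : ℂ) * ((a j : ℂ) - (b j : ℂ)) :=
          Finset.sum_congr rfl fun j _ => mul_comm _ _
        rw [h3, h2, zero_mul]
      rw [h0, Complex.exp_zero, one_mul]
end

section
/- Let R > 0 and let g : ℝ × ℝ → ℂ (a polar-coordinate image) be integrable on [0,R] × [0,2π] with g(r,θ) = 0 for r > R. Let α > 0 and define the scaled image g'(r,θ) = g(r/α, θ), which is supported in r ≤ αR. Then for all ρ, ψ ∈ ℝ, the radius-normalized polar spectra satisfy S_{g',αR}(ρ,ψ) = α · S_{g,R}(ρ,ψ). -/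
open MeasureTheory

/-- The radius-normalized polar spectrum of a polar-coordinate image `g` with radius `R`. -/
noncomputable def polarSpectrum (g : ℝ × ℝ → ℂ) (R ρ ψ : ℝ) : ℂ :=
  ∫ r in (0 : ℝ)..R, ∫ θ in (0 : ℝ)..(2 * Real.pi),
    g (r, θ) * Complex.exp (-(2 * Real.pi * Complex.I) * (((r / R) * ρ + θ * ψ : ℝ) : ℂ))

/-- Under uniform scaling, the radius-normalized polar spectrum scales by `α`. -/
theorem polarSpectrum_scaling (R : ℝ) (hR : 0 < R) (g : ℝ × ℝ → ℂ)
    (hint : IntegrableOn g (Set.Icc 0 R ×ˢ Set.Icc 0 (2 * Real.pi)))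
    (hzero : ∀ r θ : ℝ, R < r → g (r, θ) = 0)
    (α : ℝ) (hα : 0 < α) (g' : ℝ × ℝ → ℂ)
    (hg' : ∀ p : ℝ × ℝ, g' p = g (p.1 / α, p.2)) :
    ∀ ρ ψ : ℝ, polarSpectrum g' (α * R) ρ ψ = (α : ℂ) * polarSpectrum g R ρ ψ := by
  intro ρ ψ
  unfold polarSpectrum
  set F : ℝ → ℂ := fun r => ∫ θ in (0 : ℝ)..(2 * Real.pi),
    g' (r, θ) * Complex.exp (-(2 * Real.pi * Complex.I) * (((r / (α * R)) * ρ + θ * ψ : ℝ) : ℂ))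
    with hF
  have key : ∫ r in (0 : ℝ)..(α * R), F r = α • ∫ r in (0 : ℝ)..R, F (α * r) := by
    have h := intervalIntegral.smul_integral_comp_mul_left F (a := 0) (b := R) α
    rw [mul_zero] at h
    rw [← h]
  rw [show (∫ r in (0:ℝ)..(α*R), ∫ θ in (0:ℝ)..(2*Real.pi),
      g' (r, θ) * Complex.exp (-(2 * Real.pi * Complex.I) * (((r / (α * R)) * ρ + θ * ψ : ℝ) : ℂ)))
      = ∫ r in (0:ℝ)..(α*R), F r from rfl, key]
  rw [Complex.real_smul]
  congr 1
  apply intervalIntegral.integral_congr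
  intro r _
  have h1 : α * r / α = r := by field_simp
  have h2 : α * r / (α * R) = r / R := by
    rw [mul_div_mul_left _ _ (ne_of_gt hα)]
  simp only [hF, hg', h1, h2]
end

section
/- Let R > 0, let g : ℝ × ℝ → ℂ be integrable on [0,R] × [0,2π] with g(r,θ) = 0 for r > R, and assume S_{g,R}(0,0) ≠ 0. Let α > 0 and g'(r,θ) = g(r/α, θ). Then for all ρ, ψ ∈ ℝ, the normalized spectrum is scale invariant: S_{g',αR}(ρ,ψ) / S_{g',αR}(0,0) = S_{g,R}(ρ,ψ) / S_{g,R}(0,0). -/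
open MeasureTheory

/-- The spectrum normalized by its value at the origin is scale invariant. -/
theorem normalizedPolarSpectrum_scale_invariant (R : ℝ) (hR : 0 < R) (g : ℝ × ℝ → ℂ)
    (hint : IntegrableOn g (Set.Icc 0 R ×ˢ Set.Icc 0 (2 * Real.pi)))
    (hzero : ∀ r θ : ℝ, R < r → g (r, θ) = 0)
    (hS0 : polarSpectrum g R 0 0 ≠ 0)
    (α : ℝ) (hα : 0 < α) (g' : ℝ × ℝ → ℂ)
    (hg' : ∀ p : ℝ × ℝ, g' p = g (p.1 / α, p.2)) :
    ∀ ρ ψ : ℝ, polarSpectrum g' (α * R) ρ ψ / polarSpectrum g' (α * R) 0 0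
      = polarSpectrum g R ρ ψ / polarSpectrum g R 0 0 := by
  have hα' : α ≠ 0 := ne_of_gt hα
  have key : ∀ ρ ψ : ℝ, polarSpectrum g' (α * R) ρ ψ = α • polarSpectrum g R ρ ψ := by
    intro ρ ψ
    unfold polarSpectrum
    have h1 : (∫ r in (0 : ℝ)..(α * R), ∫ θ in (0 : ℝ)..(2 * Real.pi),
        g' (r, θ) * Complex.exp (-(2 * Real.pi * Complex.I) *
          (((r / (α * R)) * ρ + θ * ψ : ℝ) : ℂ)))
        = ∫ r in (0 : ℝ)..(α * R), (fun s : ℝ => ∫ θ in (0 : ℝ)..(2 * Real.pi),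
        g (s, θ) * Complex.exp (-(2 * Real.pi * Complex.I) *
          (((s / R) * ρ + θ * ψ : ℝ) : ℂ))) (r / α) := by
      apply intervalIntegral.integral_congr
      intro r _
      simp only [hg']
      congr 1
      ext θ
      congr 3
      rw [div_div, mul_comm α R, ← div_div]
    have h2 := intervalIntegral.integral_comp_div (a := 0) (b := α * R) (c := α)
      (f := fun s : ℝ => ∫ θ in (0 : ℝ)..(2 * Real.pi),
        g (s, θ) * Complex.exp (-(2 * Real.pi * Complex.I) *
          (((s / R) * ρ + θ * ψ : ℝ) : ℂ))) hα'
    rw [h1, h2]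
    rw [zero_div, mul_comm α R, mul_div_assoc, div_self hα', mul_one]
  intro ρ ψ
  rw [key, key, Complex.real_smul, Complex.real_smul,
    mul_div_mul_left _ _ (by exact_mod_cast hα')]
end
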